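/- The set of 3×3 matrices with nonnegative integer entries whose characteristic polynomial equals x³ − x − 1 has exactly 6 elements, and any two matrices in this set are conjugate to each other by a permutation matrix (i.e. they form a single orbit under simultaneous permutation of rows and columns). -/

import Mathlib

open Matrix Polynomial

private lemma charpoly3 (M : Matrix (Fin 3) (Fin 3) ℤ) :
    M.charpoly = X^3 - C (M 0 0 + M 1 1 + M 2 2) * X^2
      + C (M 0 0 * M 1 1 + M 0 0 * M 2 2 + M 1 1 * M 2 2
            - M 0 1 * M 1 0 - M 0 2 * M 2 0 - M 1 2 * M 2 1) * X
      - C (M 0 0 * M 1 1 * M 2 2 - M 0 0 * M 1 2 * M 2 1 - M 0 1 * M 1 0 * M 2 2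
            + M 0 1 * M 1 2 * M 2 0 + M 0 2 * M 1 0 * M 2 1 - M 0 2 * M 1 1 * M 2 0) := by
  rw [Matrix.charpoly, Matrix.det_fin_three]
  simp [charmatrix_apply, Matrix.diagonal, Matrix.one_apply]
  ring

private lemma one_of {x y : ℤ} (hx : 0 ≤ x) (h : x * y = 1) : x = 1 ∧ y = 1 := by
  rcases Int.mul_eq_one_iff_eq_one_or_neg_one.mp h with ⟨rfl, rfl⟩ | ⟨rfl, rfl⟩ <;> omega

private lemma solve {a b c d e f : ℤ} (ha : 0 ≤ a) (hb : 0 ≤ b) (hc : 0 ≤ c)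
    (hd : 0 ≤ d) (he : 0 ≤ e) (hf : 0 ≤ f)
    (h1 : a*c + b*e + d*f = 1) (h2 : a*d*e + b*c*f = 1) :
    (a=1∧b=0∧c=1∧d=1∧e=1∧f=0) ∨ (a=1∧b=1∧c=1∧d=0∧e=0∧f=1) ∨
    (a=1∧b=1∧c=0∧d=1∧e=1∧f=0) ∨ (a=0∧b=1∧c=1∧d=0∧e=1∧f=1) ∨
    (a=1∧b=0∧c=0∧d=1∧e=1∧f=1) ∨ (a=0∧b=1∧c=1∧d=1∧e=0∧f=1) := by
  have key : ∀ x y z : ℤ, 0 ≤ x → 0 ≤ y → 0 ≤ z → x + y + z = 1 →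
      (x=1∧y=0∧z=0)∨(y=1∧x=0∧z=0)∨(z=1∧x=0∧y=0) := by intros; omega
  have key2 : ∀ x y : ℤ, 0 ≤ x → 0 ≤ y → x + y = 1 → (x=1∧y=0)∨(y=1∧x=0) := by
    intros; omega
  rcases key _ _ _ (mul_nonneg ha hc) (mul_nonneg hb he) (mul_nonneg hd hf) h1 with
    ⟨hac, hbe, hdf⟩ | ⟨hbe, hac, hdf⟩ | ⟨hdf, hac, hbe⟩
  · obtain ⟨rfl, rfl⟩ := one_of ha hac
    have h2' : d*e + b*f = 1 := by linarith [h2]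
    rcases key2 _ _ (mul_nonneg hd he) (mul_nonneg hb hf) h2' with ⟨hde, hbf⟩ | ⟨hbf, hde⟩
    · obtain ⟨rfl, rfl⟩ := one_of hd hde
      simp only [mul_one, one_mul] at hbe hdf
      exact Or.inl ⟨rfl, hbe, rfl, rfl, rfl, hdf⟩
    · obtain ⟨rfl, rfl⟩ := one_of hb hbf
      simp only [mul_one, one_mul] at hbe hdf
      exact Or.inr (Or.inl ⟨rfl, rfl, rfl, hdf, hbe, rfl⟩)
  · obtain ⟨rfl, rfl⟩ := one_of hb hbe
    have h2' : a*d + c*f = 1 := by linarith [h2]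
    rcases key2 _ _ (mul_nonneg ha hd) (mul_nonneg hc hf) h2' with ⟨had, hcf⟩ | ⟨hcf, had⟩
    · obtain ⟨rfl, rfl⟩ := one_of ha had
      simp only [mul_one, one_mul] at hac hdf
      exact Or.inr (Or.inr (Or.inl ⟨rfl, rfl, hac, rfl, rfl, hdf⟩))
    · obtain ⟨rfl, rfl⟩ := one_of hc hcf
      simp only [mul_one, one_mul] at hac hdf
      exact Or.inr (Or.inr (Or.inr (Or.inl ⟨hac, rfl, rfl, hdf, rfl, rfl⟩)))
  · obtain ⟨rfl, rfl⟩ := one_of hd hdf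
    have h2' : a*e + b*c = 1 := by linarith [h2]
    rcases key2 _ _ (mul_nonneg ha he) (mul_nonneg hb hc) h2' with ⟨hae, hbc⟩ | ⟨hbc, hae⟩
    · obtain ⟨rfl, rfl⟩ := one_of ha hae
      simp only [mul_one, one_mul] at hac hbe
      exact Or.inr (Or.inr (Or.inr (Or.inr (Or.inl ⟨rfl, hbe, hac, rfl, rfl, rfl⟩))))
    · obtain ⟨rfl, rfl⟩ := one_of hb hbc
      simp only [mul_one, one_mul] at hac hbe
      exact Or.inr (Or.inr (Or.inr (Or.inr (Or.inr ⟨hac, rfl, rfl, rfl, hbe, rfl⟩))))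

private def A1 : Matrix (Fin 3) (Fin 3) ℤ := !![0,1,0;1,0,1;1,0,0]
private def A2 : Matrix (Fin 3) (Fin 3) ℤ := !![0,1,1;1,0,0;0,1,0]
private def A3 : Matrix (Fin 3) (Fin 3) ℤ := !![0,1,1;0,0,1;1,0,0]
private def A4 : Matrix (Fin 3) (Fin 3) ℤ := !![0,0,1;1,0,0;1,1,0]
private def A5 : Matrix (Fin 3) (Fin 3) ℤ := !![0,1,0;0,0,1;1,1,0]
private def A6 : Matrix (Fin 3) (Fin 3) ℤ := !![0,0,1;1,0,1;0,1,0]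

private lemma classify (M : Matrix (Fin 3) (Fin 3) ℤ) (h0 : ∀ i j, 0 ≤ M i j)
    (hcp : M.charpoly = X^3 - X - 1) :
    M = A1 ∨ M = A2 ∨ M = A3 ∨ M = A4 ∨ M = A5 ∨ M = A6 := by
  have h := (charpoly3 M).symm.trans hcp
  have ht : M 0 0 + M 1 1 + M 2 2 = 0 := by
    have := congrArg (fun p => coeff p 2) h
    simp only [coeff_sub, coeff_add, coeff_C_mul, coeff_X_pow, coeff_C, coeff_X,
      coeff_one] at this
    norm_num at this; omega
  have hs : M 0 0 * M 1 1 + M 0 0 * M 2 2 + M 1 1 * M 2 2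
      - M 0 1 * M 1 0 - M 0 2 * M 2 0 - M 1 2 * M 2 1 = -1 := by
    have := congrArg (fun p => coeff p 1) h
    simp only [coeff_sub, coeff_add, coeff_C_mul, coeff_X_pow, coeff_C, coeff_X,
      coeff_one] at this
    norm_num at this; linarith
  have hd : M 0 0 * M 1 1 * M 2 2 - M 0 0 * M 1 2 * M 2 1 - M 0 1 * M 1 0 * M 2 2
      + M 0 1 * M 1 2 * M 2 0 + M 0 2 * M 1 0 * M 2 1 - M 0 2 * M 1 1 * M 2 0 = 1 := by
    have := congrArg (fun p => coeff p 0) h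
    simp only [coeff_sub, coeff_add, coeff_C_mul, coeff_X_pow, coeff_C, coeff_X,
      coeff_one] at this
    norm_num at this; linarith
  have h00 : M 0 0 = 0 := by have := h0 0 0; have := h0 1 1; have := h0 2 2; omega
  have h11 : M 1 1 = 0 := by have := h0 0 0; have := h0 1 1; have := h0 2 2; omega
  have h22 : M 2 2 = 0 := by have := h0 0 0; have := h0 1 1; have := h0 2 2; omega
  have hs' : M 0 1 * M 1 0 + M 0 2 * M 2 0 + M 1 2 * M 2 1 = 1 := by
    linear_combination -hs + (M 1 1 + M 2 2) * h00 + M 2 2 * h11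
  have hd' : M 0 1 * M 1 2 * M 2 0 + M 0 2 * M 1 0 * M 2 1 = 1 := by
    linear_combination hd + (M 1 2 * M 2 1 - M 1 1 * M 2 2) * h00
      + (M 0 1 * M 1 0) * h22 + (M 0 2 * M 2 0) * h11
  have hMeq : M = !![M 0 0, M 0 1, M 0 2; M 1 0, M 1 1, M 1 2; M 2 0, M 2 1, M 2 2] := by
    ext i j; fin_cases i <;> fin_cases j <;> rfl
  rcases solve (h0 0 1) (h0 0 2) (h0 1 0) (h0 1 2) (h0 2 0) (h0 2 1)
    hs' hd' with
    ⟨e1,e2,e3,e4,e5,e6⟩ | ⟨e1,e2,e3,e4,e5,e6⟩ | ⟨e1,e2,e3,e4,e5,e6⟩ |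
    ⟨e1,e2,e3,e4,e5,e6⟩ | ⟨e1,e2,e3,e4,e5,e6⟩ | ⟨e1,e2,e3,e4,e5,e6⟩ <;>
    rw [h00, h11, h22, e1, e2, e3, e4, e5, e6] at hMeq
  · exact Or.inl hMeq
  · exact Or.inr (Or.inl hMeq)
  · exact Or.inr (Or.inr (Or.inl hMeq))
  · exact Or.inr (Or.inr (Or.inr (Or.inl hMeq)))
  · exact Or.inr (Or.inr (Or.inr (Or.inr (Or.inl hMeq))))
  · exact Or.inr (Or.inr (Or.inr (Or.inr (Or.inr hMeq))))

/-- There are exactly 6 nonnegative integer `3 × 3` matrices with characteristic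
polynomial `x³ - x - 1`, and they form a single orbit under simultaneous permutation
of rows and columns (i.e. conjugation by permutation matrices). -/
theorem stmt_11 (S : Set (Matrix (Fin 3) (Fin 3) ℤ))
    (hS : S = {M : Matrix (Fin 3) (Fin 3) ℤ | (∀ i j, 0 ≤ M i j) ∧
      M.charpoly = X ^ 3 - X - 1}) :
    S.ncard = 6 ∧
      ∀ M ∈ S, ∀ N ∈ S, ∃ σ : Equiv.Perm (Fin 3), N = M.submatrix σ σ := by
  have hSet : S = (↑({A1, A2, A3, A4, A5, A6} : Finset (Matrix (Fin 3) (Fin 3) ℤ)) :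
      Set (Matrix (Fin 3) (Fin 3) ℤ)) := by
    rw [hS]
    ext M
    simp only [Set.mem_setOf_eq, Finset.coe_insert, Set.mem_insert_iff,
      Finset.coe_singleton, Set.mem_singleton_iff]
    constructor
    · rintro ⟨h0, hcp⟩
      exact classify M h0 hcp
    · rintro (rfl | rfl | rfl | rfl | rfl | rfl) <;>
        refine ⟨fun i j => by fin_cases i <;> fin_cases j <;> simp [A1, A2, A3, A4, A5, A6], ?_⟩ <;>
        · rw [show (X^3 - X - 1 : ℤ[X]) = X^3 - X - 1 from rfl]
          rw [charpoly3]
          norm_num [A1, A2, A3, A4, A5, A6, Matrix.vecHead, Matrix.vecTail, Matrix.cons_val, Matrix.cons_val_two]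
          ring
  have orb : ∀ P ∈ S, ∃ σ : Equiv.Perm (Fin 3), P = A1.submatrix σ σ := by
    intro P hP
    rw [hSet] at hP
    simp only [Finset.coe_insert, Set.mem_insert_iff, Finset.coe_singleton,
      Set.mem_singleton_iff] at hP
    rcases hP with rfl | rfl | rfl | rfl | rfl | rfl
    · exact ⟨1, by decide⟩
    · exact ⟨Equiv.swap 0 1, by decide⟩
    · exact ⟨Equiv.swap 0 1 * Equiv.swap 1 2, by decide⟩
    · exact ⟨Equiv.swap 1 2, by decide⟩
    · exact ⟨Equiv.swap 1 2 * Equiv.swap 0 1, by decide⟩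
    · exact ⟨Equiv.swap 0 2, by decide⟩
  constructor
  · rw [hSet, Set.ncard_coe_finset]
    decide
  · intro M hM N hN
    obtain ⟨σM, rfl⟩ := orb M hM
    obtain ⟨σN, rfl⟩ := orb N hN
    refine ⟨σM⁻¹ * σN, ?_⟩
    rw [Matrix.submatrix_submatrix]
    have hcomp : ⇑σM ∘ ⇑(σM⁻¹ * σN) = ⇑σN := by
      funext x; simp
    rw [hcomp]
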